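/- For all integers s ≥ 3 and n ≥ 1, ex(n, P^{(3)}_s) = f(n, s−2). -/

import Mathlib

open Finset
open scoped Classical

/-- Edge set of the natural tight path `P^{(r)}_s` on vertex set `[s] = {1,…,s}`:
all intervals of `r` consecutive integers. -/
def pathEdges (r s : ℕ) : Finset (Finset ℕ) :=
  (Finset.Icc 1 (s - r + 1)).image (fun i => Finset.Icc i (i + r - 1))

/-- Edge set of the loose path `LP^{(r)}_s`: only the first and last edges. -/
def loosePathEdges (r s : ℕ) : Finset (Finset ℕ) :=
  {Finset.Icc 1 r, Finset.Icc (s - r + 1) s}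

/-- `C` is the edge set of a copy in `K^{(r)}_n` of the ordered hypergraph with
vertex set `[s]` and edge set `E`, i.e. the image of `E` under a strictly
increasing map `[s] → [n]`. -/
def IsCopy (n s : ℕ) (E : Finset (Finset ℕ)) (C : Finset (Finset ℕ)) : Prop :=
  ∃ f : ℕ → ℕ, StrictMonoOn f ↑(Finset.Icc 1 s) ∧
    (∀ v ∈ Finset.Icc 1 s, f v ∈ Finset.Icc 1 n) ∧
    C = E.image (fun e => e.image f)

/-- A transversal: a set `T` of `r`-element subsets of `[n]` meeting every copy. -/
def IsTransversal (n r s : ℕ) (E : Finset (Finset ℕ)) (T : Finset (Finset ℕ)) : Prop :=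
  T ⊆ (Finset.Icc 1 n).powersetCard r ∧
  ∀ C : Finset (Finset ℕ), IsCopy n s E C → ∃ e ∈ C, e ∈ T

/-- The transversal number `τ(n,H)`. -/
noncomputable def tau (n r s : ℕ) (E : Finset (Finset ℕ)) : ℕ :=
  sInf {m | ∃ T : Finset (Finset ℕ), IsTransversal n r s E T ∧ T.card = m}

/-- A packing: an edge-disjoint family of copies. -/
def IsPacking (n s : ℕ) (E : Finset (Finset ℕ)) (P : Finset (Finset (Finset ℕ))) : Prop :=
  (∀ C ∈ P, IsCopy n s E C) ∧
  ∀ C ∈ P, ∀ C' ∈ P, C ≠ C' → Disjoint C C'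

/-- The packing number `ν(n,H)`. -/
noncomputable def nu (n s : ℕ) (E : Finset (Finset ℕ)) : ℕ :=
  sSup {m | ∃ P : Finset (Finset (Finset ℕ)), IsPacking n s E P ∧ P.card = m}

/-- The ordered Turán number: maximum number of edges of a subgraph of
`K^{(r)}_n` containing no copy of the hypergraph with edge set `E`. -/
noncomputable def exNum (n r s : ℕ) (E : Finset (Finset ℕ)) : ℕ :=
  sSup {m | ∃ G ⊆ (Finset.Icc 1 n).powersetCard r,
    (∀ C : Finset (Finset ℕ), IsCopy n s E C → ¬ C ⊆ G) ∧ G.card = m}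

/-- `S ⊆ [n]` is `m`-left-biased. -/
def LeftBiased (n m : ℕ) (S : Finset ℕ) : Prop :=
  ∃ u ≤ n / 2, (S ∩ Finset.Icc 1 u).card = m ∧ S ∩ Finset.Icc (n + 1 - u) n = ∅

/-- `h(n,t,m)`: the number of `m`-left-biased `t`-element subsets of `[n]`. -/
noncomputable def hcount (n t m : ℕ) : ℕ :=
  (((Finset.Icc 1 n).powersetCard t).filter (LeftBiased n m)).card

/-- A fractional transversal. -/
def IsFracTransversal (n r s : ℕ) (E : Finset (Finset ℕ)) (w : Finset ℕ → ℝ) : Prop :=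
  (∀ e ∈ (Finset.Icc 1 n).powersetCard r, 0 ≤ w e) ∧
  ∀ C : Finset (Finset ℕ), IsCopy n s E C → 1 ≤ ∑ e ∈ C, w e

/-- The fractional transversal number `τ*(n,H)`. -/
noncomputable def tauStar (n r s : ℕ) (E : Finset (Finset ℕ)) : ℝ :=
  sInf {x : ℝ | ∃ w : Finset ℕ → ℝ, IsFracTransversal n r s E w ∧
    x = ∑ e ∈ (Finset.Icc 1 n).powersetCard r, w e}

/-- A `k`-edge-labeling of the ordered complete graph on `[n]`. -/
def IsLabeling (n k : ℕ) (φ : ℕ → ℕ → ℕ) : Prop :=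
  ∀ u v : ℕ, u ∈ Finset.Icc 1 n → v ∈ Finset.Icc 1 n → u < v → φ u v ∈ Finset.Icc 1 k

/-- The number of good triples `u < v < w` in `[n]` (those with `φ(uv) < φ(vw)`). -/
def goodCount (n : ℕ) (φ : ℕ → ℕ → ℕ) : ℕ :=
  (((Finset.Icc 1 n) ×ˢ (Finset.Icc 1 n) ×ˢ (Finset.Icc 1 n)).filter
    (fun p => p.1 < p.2.1 ∧ p.2.1 < p.2.2 ∧ φ p.1 p.2.1 < φ p.2.1 p.2.2)).card

/-- The number of bad triples `u < v < w` in `[n]` (those with `φ(uv) ≥ φ(vw)`). -/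
def badCount (n : ℕ) (φ : ℕ → ℕ → ℕ) : ℕ :=
  (((Finset.Icc 1 n) ×ˢ (Finset.Icc 1 n) ×ˢ (Finset.Icc 1 n)).filter
    (fun p => p.1 < p.2.1 ∧ p.2.1 < p.2.2 ∧ ¬ φ p.1 p.2.1 < φ p.2.1 p.2.2)).card

/-- `f(n,k)`: the maximum number of good triples over all `k`-edge-labelings of `[n]`. -/
noncomputable def fmax (n k : ℕ) : ℕ :=
  sSup {m | ∃ φ : ℕ → ℕ → ℕ, IsLabeling n k φ ∧ goodCount n φ = m}

/-- A labeling is monotone if `φ(uv) ≤ φ(vw)` whenever `u < v < w` in `[n]`. -/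
def IsMonotone (n : ℕ) (φ : ℕ → ℕ → ℕ) : Prop :=
  ∀ u v w : ℕ, u ∈ Finset.Icc 1 n → v ∈ Finset.Icc 1 n → w ∈ Finset.Icc 1 n →
    u < v → v < w → φ u v ≤ φ v w

/-- `Φ_L(v) = max{φ(uv) : u < v}`, with `Φ_L(1) = 0`. -/
def PhiL (φ : ℕ → ℕ → ℕ) (v : ℕ) : ℕ := (Finset.Ico 1 v).sup (fun u => φ u v)

/-- `Φ_R(v) = min{φ(vw) : v < w ≤ n}`, with `Φ_R(n) = k+1`. -/
noncomputable def PhiR (n k : ℕ) (φ : ℕ → ℕ → ℕ) (v : ℕ) : ℕ :=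
  if v = n then k + 1 else sInf {m | ∃ w ∈ Finset.Ioc v n, φ v w = m}

/-- `X_i = {v ∈ [n] : Φ_L(v) = i}`. -/
def XL (n : ℕ) (φ : ℕ → ℕ → ℕ) (i : ℕ) : Finset ℕ :=
  (Finset.Icc 1 n).filter (fun v => PhiL φ v = i)

/-- `X̂_i = {v ∈ [n] : Φ_R(v) = i}`. -/
noncomputable def XR (n k : ℕ) (φ : ℕ → ℕ → ℕ) (i : ℕ) : Finset ℕ :=
  (Finset.Icc 1 n).filter (fun v => PhiR n k φ v = i)

/-- For all `s ≥ 3` and `n ≥ 1`, `ex(n, P^{(3)}_s) = f(n, s-2)`. -/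
def phi (G : Finset (Finset ℕ)) (u v : ℕ) : ℕ :=
  if h : u < v then
    1 + ((Finset.Ico 1 u).filter (fun x => ({x, u, v} : Finset ℕ) ∈ G)).sup
      (fun x => phi G x u)
  else 0
termination_by v
decreasing_by exact h

lemma phi_def (G : Finset (Finset ℕ)) (u v : ℕ) (h : u < v) :
    phi G u v = 1 + ((Finset.Ico 1 u).filter (fun x => ({x, u, v} : Finset ℕ) ∈ G)).sup
      (fun x => phi G x u) := by
  rw [phi]; simp [h]

lemma phi_pos (G : Finset (Finset ℕ)) {u v : ℕ} (h : u < v) : 1 ≤ phi G u v := by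
  rw [phi_def G u v h]; omega

lemma phi_good (G : Finset (Finset ℕ)) {u v w : ℕ} (hu : 1 ≤ u) (h1 : u < v) (h2 : v < w)
    (hG : ({u, v, w} : Finset ℕ) ∈ G) : phi G u v < phi G v w := by
  rw [phi_def G v w h2]
  have : phi G u v ≤ ((Finset.Ico 1 v).filter (fun x => ({x, v, w} : Finset ℕ) ∈ G)).sup
      (fun x => phi G x v) := by
    exact Finset.le_sup (f := fun x => phi G x v)
      (by simp [Finset.mem_filter, Finset.mem_Ico, hu, h1, hG])
  omega

lemma phi_chain (G : Finset (Finset ℕ)) (t : ℕ) :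
    ∀ u v : ℕ, 1 ≤ u → u < v → t + 1 ≤ phi G u v →
    ∃ g : ℕ → ℕ, StrictMonoOn g ↑(Finset.Icc 1 (t + 2)) ∧ 1 ≤ g 1 ∧
      g (t + 1) = u ∧ g (t + 2) = v ∧
      ∀ i ∈ Finset.Icc 1 t, ({g i, g (i + 1), g (i + 2)} : Finset ℕ) ∈ G := by
  induction t with
  | zero =>
    intro u v hu huv _
    refine ⟨fun i => if i = 1 then u else v, ?_, by simp [hu], by simp, by simp, by simp⟩
    intro a ha b hb hab
    simp only [Finset.coe_Icc, Set.mem_Icc] at ha hb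
    have ha1 : a = 1 := by omega
    have hb2 : b = 2 := by omega
    simp [ha1, hb2, huv]
  | succ t ih =>
    intro u v hu huv hphi
    rw [phi_def G u v huv] at hphi
    set F := (Finset.Ico 1 u).filter (fun x => ({x, u, v} : Finset ℕ) ∈ G) with hF
    have hsup : t + 1 ≤ F.sup (fun x => phi G x u) := by omega
    have hex : ∃ x ∈ F, t + 1 ≤ phi G x u :=
      (Finset.le_sup_iff (by exact Nat.succ_pos t : (⊥ : ℕ) < t + 1)).mp hsup
    obtain ⟨x, hxF, hxphi⟩ := hex
    rw [hF, Finset.mem_filter, Finset.mem_Ico] at hxF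
    obtain ⟨⟨hx1, hxu⟩, hxG⟩ := hxF
    obtain ⟨g, hmono, hg1, hgt1, hgt2, htrip⟩ := ih x u hx1 hxu hxphi
    refine ⟨fun i => if i ≤ t + 2 then g i else v, ?_, ?_, ?_, ?_, ?_⟩
    · intro a ha b hb hab
      simp only [Finset.coe_Icc, Set.mem_Icc] at ha hb
      by_cases hbt : b ≤ t + 2
      · have hat : a ≤ t + 2 := by omega
        simp only [hat, hbt, if_pos]
        exact hmono (by simp only [Finset.coe_Icc, Set.mem_Icc]; omega) (by simp only [Finset.coe_Icc, Set.mem_Icc]; omega) hab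
      · have hb3 : b = t + 3 := by omega
        simp only [hb3]
        by_cases hat : a ≤ t + 2
        · simp only [hat, if_pos, if_neg (by omega : ¬ t + 3 ≤ t + 2)]
          have : g a ≤ g (t + 2) := by
            rcases eq_or_lt_of_le hat with h | h
            · rw [h]
            · exact le_of_lt (hmono (by simp only [Finset.coe_Icc, Set.mem_Icc]; omega) (by simp only [Finset.coe_Icc, Set.mem_Icc]; omega) h)
          rw [hgt2] at this; omega
        · omega
    · simp only [if_pos (by omega : (1:ℕ) ≤ t + 2)]; exact hg1
    · simp only [if_pos (le_refl (t + 2))]; exact hgt2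
    · simp [if_neg (by omega : ¬ t + 2 + 1 ≤ t + 2)]
    · intro i hi
      rw [Finset.mem_Icc] at hi
      by_cases hit : i ≤ t
      · have h1 : i ≤ t + 2 := by omega
        have h2 : i + 1 ≤ t + 2 := by omega
        have h3 : i + 2 ≤ t + 2 := by omega
        simp only [h1, h2, h3, if_pos]
        exact htrip i (Finset.mem_Icc.mpr ⟨hi.1, hit⟩)
      · have hit1 : i = t + 1 := by omega
        subst hit1
        simp only [if_pos (by omega : t + 1 ≤ t + 2), if_pos (le_refl (t+2)),
          if_neg (by omega : ¬ t + 1 + 2 ≤ t + 2)]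
        rw [hgt1, hgt2]
        exact hxG

lemma Icc_triple (i : ℕ) : Finset.Icc i (i + 2) = ({i, i + 1, i + 2} : Finset ℕ) := by
  ext x; simp only [Finset.mem_Icc, Finset.mem_insert, Finset.mem_singleton]; omega

lemma image_Icc_triple (g : ℕ → ℕ) (i : ℕ) :
    (Finset.Icc i (i + 2)).image g = ({g i, g (i + 1), g (i + 2)} : Finset ℕ) := by
  rw [Icc_triple]
  simp [Finset.image_insert]

lemma triple_eq {a b c u v w : ℕ} (h1 : a < b) (h2 : b < c) (h3 : u < v) (h4 : v < w)
    (h : ({a, b, c} : Finset ℕ) = {u, v, w}) : a = u ∧ b = v ∧ c = w := by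
  have H := Finset.ext_iff.mp h
  simp only [Finset.mem_insert, Finset.mem_singleton] at H
  have ha := (H a).mp (Or.inl rfl)
  have hb := (H b).mp (Or.inr (Or.inl rfl))
  have hc := (H c).mp (Or.inr (Or.inr rfl))
  have hu := (H u).mpr (Or.inl rfl)
  have hv := (H v).mpr (Or.inr (Or.inl rfl))
  have hw := (H w).mpr (Or.inr (Or.inr rfl))
  omega

lemma exists_sorted3 {e : Finset ℕ} (h : e.card = 3) :
    ∃ a b c, a < b ∧ b < c ∧ e = {a, b, c} := by
  obtain ⟨a, b, c, hab, hac, hbc, rfl⟩ := Finset.card_eq_three.mp h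
  rcases Nat.lt_trichotomy a b with h1 | h1 | h1
  · rcases Nat.lt_trichotomy b c with h2 | h2 | h2
    · exact ⟨a, b, c, h1, h2, rfl⟩
    · exact absurd h2 hbc
    · rcases Nat.lt_trichotomy a c with h3 | h3 | h3
      · exact ⟨a, c, b, h3, h2, by ext x; simp; tauto⟩
      · exact absurd h3 hac
      · exact ⟨c, a, b, h3, h1, by ext x; simp; tauto⟩
  · exact absurd h1 hab
  · rcases Nat.lt_trichotomy a c with h2 | h2 | h2
    · exact ⟨b, a, c, h1, h2, by ext x; simp; tauto⟩
    · exact absurd h2 hac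
    · rcases Nat.lt_trichotomy b c with h3 | h3 | h3
      · exact ⟨b, c, a, h3, h2, by ext x; simp; tauto⟩
      · exact absurd h3 hbc
      · exact ⟨c, b, a, h3, h1, by ext x; simp; tauto⟩

lemma phi_le (n s : ℕ) (hs : 3 ≤ s) (G : Finset (Finset ℕ))
    (hG : G ⊆ (Finset.Icc 1 n).powersetCard 3)
    (hfree : ∀ C : Finset (Finset ℕ), IsCopy n s (pathEdges 3 s) C → ¬ C ⊆ G)
    (u v : ℕ) (hu : 1 ≤ u) (hv : v ≤ n) (huv : u < v) : phi G u v ≤ s - 2 := by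
  by_contra hcon
  push_neg at hcon
  have hphi : (s - 2) + 1 ≤ phi G u v := hcon
  obtain ⟨g, hmono, hg1, hgt1, hgt2, htrip⟩ := phi_chain G (s - 2) u v hu huv hphi
  have hs2 : s - 2 + 2 = s := by omega
  rw [hs2] at hmono hgt2
  -- g maps [1,s] into [1,n]
  have hrange : ∀ i ∈ Finset.Icc 1 s, g i ∈ Finset.Icc 1 n := by
    intro i hi
    rw [Finset.mem_Icc] at hi
    have hlow : 1 ≤ g i := by
      rcases eq_or_lt_of_le hi.1 with h | h
      · rw [← h]; exact hg1
      · have := hmono (by simp only [Finset.coe_Icc, Set.mem_Icc]; omega)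
          (by simp only [Finset.coe_Icc, Set.mem_Icc]; omega) h
        omega
    have hhigh : g i ≤ n := by
      rcases eq_or_lt_of_le hi.2 with h | h
      · rw [h, hgt2]; exact hv
      · have := hmono (by simp only [Finset.coe_Icc, Set.mem_Icc]; omega)
          (by simp only [Finset.coe_Icc, Set.mem_Icc]; omega) h
        rw [hgt2] at this; omega
    exact Finset.mem_Icc.mpr ⟨hlow, hhigh⟩
  apply hfree ((pathEdges 3 s).image (fun e => e.image g)) ⟨g, hmono, hrange, rfl⟩
  intro E hE
  rw [Finset.mem_image] at hE
  obtain ⟨e, he, rfl⟩ := hE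
  rw [pathEdges, Finset.mem_image] at he
  obtain ⟨i, hi, rfl⟩ := he
  rw [Finset.mem_Icc] at hi
  have h31 : s - 3 + 1 = s - 2 := by omega
  have h21 : i + 3 - 1 = i + 2 := by omega
  rw [h21, image_Icc_triple]
  exact htrip i (Finset.mem_Icc.mpr ⟨hi.1, by omega⟩)

theorem stmt10 (s n : ℕ) (hs : 3 ≤ s) (hn : 1 ≤ n) :
    exNum n 3 s (pathEdges 3 s) = fmax n (s - 2) := by
  have pathNe : (pathEdges 3 s).Nonempty := by
    refine ⟨Finset.Icc 1 3, ?_⟩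
    rw [pathEdges, Finset.mem_image]
    exact ⟨1, Finset.mem_Icc.mpr ⟨le_refl 1, by omega⟩, rfl⟩
  have hcopy_ne : ∀ C, IsCopy n s (pathEdges 3 s) C → C.Nonempty := by
    rintro C ⟨f, -, -, rfl⟩; exact pathNe.image _
  have hA_ne : Set.Nonempty {m | ∃ G ⊆ (Finset.Icc 1 n).powersetCard 3,
      (∀ C : Finset (Finset ℕ), IsCopy n s (pathEdges 3 s) C → ¬ C ⊆ G) ∧ G.card = m} :=
    ⟨0, ∅, Finset.empty_subset _, ⟨fun C hC hsub =>
      (hcopy_ne C hC).ne_empty (Finset.subset_empty.mp hsub), Finset.card_empty⟩⟩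
  have hA_bdd : BddAbove {m | ∃ G ⊆ (Finset.Icc 1 n).powersetCard 3,
      (∀ C : Finset (Finset ℕ), IsCopy n s (pathEdges 3 s) C → ¬ C ⊆ G) ∧ G.card = m} :=
    ⟨((Finset.Icc 1 n).powersetCard 3).card, by
      rintro m ⟨G, hG, -, rfl⟩; exact Finset.card_le_card hG⟩
  have hB_ne : Set.Nonempty {m | ∃ φ : ℕ → ℕ → ℕ, IsLabeling n (s - 2) φ ∧ goodCount n φ = m} :=
    ⟨goodCount n (fun _ _ => 1), fun _ _ => 1,
      by intro u v _ _ _; simp only [Finset.mem_Icc]; omega, rfl⟩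
  have hB_bdd : BddAbove {m | ∃ φ : ℕ → ℕ → ℕ, IsLabeling n (s - 2) φ ∧ goodCount n φ = m} :=
    ⟨((Finset.Icc 1 n) ×ˢ (Finset.Icc 1 n) ×ˢ (Finset.Icc 1 n)).card, by
      rintro m ⟨φ, -, rfl⟩; exact Finset.card_filter_le _ _⟩
  rw [exNum, fmax]
  apply le_antisymm
  · -- exNum ≤ fmax
    obtain ⟨G, hGsub, hGfree, hGcard⟩ := Nat.sSup_mem hA_ne hA_bdd
    rw [← hGcard]
    have hlab : IsLabeling n (s - 2) (phi G) := by
      intro u v hu hv huv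
      rw [Finset.mem_Icc] at hu hv ⊢
      exact ⟨phi_pos G huv, phi_le n s hs G hGsub hGfree u v hu.1 hv.2 huv⟩
    have hcard_le : G.card ≤ goodCount n (phi G) := by
      apply Finset.card_le_card_of_surjOn (fun p => ({p.1, p.2.1, p.2.2} : Finset ℕ))
      intro e he
      rw [Finset.mem_coe] at he
      have hpc := hGsub he
      rw [Finset.mem_powersetCard] at hpc
      obtain ⟨a, b, c, hab, hbc, rfl⟩ := exists_sorted3 hpc.2
      have ha : a ∈ Finset.Icc 1 n := hpc.1 (by simp)
      have hb : b ∈ Finset.Icc 1 n := hpc.1 (by simp)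
      have hc : c ∈ Finset.Icc 1 n := hpc.1 (by simp)
      refine ⟨(a, b, c), ?_, rfl⟩
      rw [Finset.mem_coe, Finset.mem_filter]
      refine ⟨by simp [Finset.mem_product, ha, hb, hc], hab, hbc, ?_⟩
      exact phi_good G (Finset.mem_Icc.mp ha).1 hab hbc he
    exact le_trans hcard_le (le_csSup hB_bdd ⟨phi G, hlab, rfl⟩)
  · -- fmax ≤ exNum
    obtain ⟨φ, hlab, hφcard⟩ := Nat.sSup_mem hB_ne hB_bdd
    rw [← hφcard]
    set G := ((Finset.Icc 1 n).powersetCard 3).filter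
      (fun e => ∃ a b c : ℕ, a < b ∧ b < c ∧ e = {a, b, c} ∧ φ a b < φ b c) with hGdef
    have hcount : goodCount n φ ≤ G.card := by
      apply Finset.card_le_card_of_injOn (fun p => ({p.1, p.2.1, p.2.2} : Finset ℕ))
      · intro p hp
        rw [Finset.mem_coe, Finset.mem_filter] at hp
        obtain ⟨hpmem, h1, h2, h3⟩ := hp
        simp only [Finset.mem_product] at hpmem
        rw [hGdef, Finset.mem_coe, Finset.mem_filter, Finset.mem_powersetCard]
        refine ⟨⟨?_, ?_⟩, p.1, p.2.1, p.2.2, h1, h2, rfl, h3⟩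
        · intro x hx
          simp only [Finset.mem_insert, Finset.mem_singleton] at hx
          rcases hx with rfl | rfl | rfl
          · exact hpmem.1
          · exact hpmem.2.1
          · exact hpmem.2.2
        · exact Finset.card_eq_three.mpr ⟨p.1, p.2.1, p.2.2, by omega, by omega, by omega, rfl⟩
      · intro p hp q hq heq
        rw [Finset.mem_coe, Finset.mem_filter] at hp hq
        have h := triple_eq hp.2.1 hp.2.2.1 hq.2.1 hq.2.2.1 heq
        exact Prod.ext h.1 (Prod.ext h.2.1 h.2.2)
    have hnocopy : ∀ C : Finset (Finset ℕ), IsCopy n s (pathEdges 3 s) C → ¬ C ⊆ G := by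
      rintro C ⟨f, hmono, hrange, rfl⟩ hsub
      have key : ∀ i, 1 ≤ i → i ≤ s - 2 → φ (f i) (f (i + 1)) < φ (f (i + 1)) (f (i + 2)) := by
        intro i hi1 hi2
        have hmem : (Finset.Icc i (i + 2)).image f ∈ G := by
          apply hsub
          rw [Finset.mem_image]
          refine ⟨Finset.Icc i (i + 2), ?_, rfl⟩
          rw [pathEdges, Finset.mem_image]
          exact ⟨i, Finset.mem_Icc.mpr ⟨hi1, by omega⟩, rfl⟩
        rw [image_Icc_triple, hGdef, Finset.mem_filter] at hmem
        obtain ⟨-, a, b, c, hab, hbc, heq, hφ⟩ := hmem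
        have hi' : ∀ j, i ≤ j → j ≤ i + 2 → j ∈ (↑(Finset.Icc 1 s) : Set ℕ) := by
          intro j hj1 hj2
          simp only [Finset.coe_Icc, Set.mem_Icc]; omega
        have hf1 : f i < f (i + 1) := hmono (hi' i le_rfl (by omega)) (hi' (i+1) (by omega) (by omega)) (by omega)
        have hf2 : f (i + 1) < f (i + 2) := hmono (hi' (i+1) (by omega) (by omega)) (hi' (i+2) (by omega) le_rfl) (by omega)
        obtain ⟨e1, e2, e3⟩ := triple_eq hf1 hf2 hab hbc heq
        rw [e1, e2, e3]
        exact hφ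
      have hchain : ∀ j, 1 ≤ j → j + 1 ≤ s → j ≤ φ (f j) (f (j + 1)) := by
        intro j
        induction j with
        | zero => omega
        | succ j ih =>
          intro _ hj
          by_cases hj0 : j = 0
          · subst hj0
            have := hlab (f 1) (f 2) (hrange 1 (by simp; omega)) (hrange 2 (by simp; omega))
              (hmono (by simp; omega) (by simp; omega) (by omega))
            rw [Finset.mem_Icc] at this
            exact this.1
          · have h1 : φ (f j) (f (j + 1)) < φ (f (j + 1)) (f (j + 2)) :=
              key j (by omega) (by omega)
            have h2 := ih (by omega) (by omega)
            have : j + 1 + 1 = j + 2 := rfl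
            rw [this]
            omega
      have hfin := hchain (s - 1) (by omega) (by omega)
      have hs1 : s - 1 + 1 = s := by omega
      rw [hs1] at hfin
      have := hlab (f (s - 1)) (f s) (hrange (s - 1) (by simp; omega)) (hrange s (by simp; omega))
        (hmono (by simp; omega) (by simp; omega) (by omega))
      rw [Finset.mem_Icc] at this
      omega
    exact le_trans hcount (le_csSup hA_bdd ⟨G, Finset.filter_subset _ _, hnocopy, rfl⟩)
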